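/- Let r > 0 and let D_r : ℝ² → ℝ be the normalized two-dimensional Gaussian D_r(w) = (√(2r√π)/(2πr²))·exp(−‖w‖₂²/(2r²)). Let w_i, w_j ∈ ℝ² and set d = ‖w_i − w_j‖₂. Then the average over the scan angle of the correlation of the two line-projected copies of D_r satisfies the two-sided bound: (1 − d²/(8r²))·𝟙{d ≤ 2r} + (r/(2d))·𝟙{d > 2r} ≤ (1/π)·∫₀^π [ ∫_ℝ L_θ[D_r(· − w_i)](t)·L_θ[D_r(· − w_j)](t) dt ] dθ ≤ 1/√(1 + d²/(4r²)). -/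

import Mathlib

noncomputable section
open MeasureTheory

/-- Probe direction `u_θ = (cos θ, sin θ)`. -/
def uvec (θ : ℝ) : ℝ × ℝ := (Real.cos θ, Real.sin θ)

/-- Sweep direction `u_θ^⊥ = (sin θ, -cos θ)`. -/
def uperp (θ : ℝ) : ℝ × ℝ := (Real.sin θ, -Real.cos θ)

/-- Euclidean inner product on ℝ². -/
def dot2 (a b : ℝ × ℝ) : ℝ := a.1 * b.1 + a.2 * b.2

/-- Euclidean norm on ℝ². -/
def norm2 (a : ℝ × ℝ) : ℝ := Real.sqrt (a.1 ^ 2 + a.2 ^ 2)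

/-- Line projection at angle θ: `L_θ[Y](t) = ∫ Y(s·u_θ + t·u_θ^⊥) ds`. -/
def lineProj (Y : ℝ × ℝ → ℝ) (θ t : ℝ) : ℝ := ∫ s : ℝ, Y (s • uvec θ + t • uperp θ)
/-- Normalized two-dimensional Gaussian of width `r`, whose line projections have unit
`L²(ℝ)` norm. -/
def gauss (r : ℝ) (w : ℝ × ℝ) : ℝ :=
  (Real.sqrt (2 * r * Real.sqrt Real.pi) / (2 * Real.pi * r ^ 2)) *
    Real.exp (-(norm2 w) ^ 2 / (2 * r ^ 2))

namespace CoherenceAux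

open Real Filter intervalIntegral

lemma norm2_sq (a : ℝ × ℝ) : (norm2 a) ^ 2 = a.1 ^ 2 + a.2 ^ 2 :=
  Real.sq_sqrt (by positivity)

lemma decomp (θ s t : ℝ) (w : ℝ × ℝ) :
    (norm2 (s • uvec θ + t • uperp θ - w)) ^ 2
      = (s - dot2 w (uvec θ)) ^ 2 + (t - dot2 w (uperp θ)) ^ 2 := by
  rw [norm2_sq]
  simp only [uvec, uperp, dot2, Prod.smul_mk, smul_eq_mul, Prod.mk_add_mk, Prod.fst_sub,
    Prod.snd_sub, Prod.fst_add, Prod.snd_add, Prod.smul_fst, Prod.smul_snd]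
  linear_combination (s^2 + t^2 - w.1^2 - w.2^2) * Real.sin_sq_add_cos_sq θ

lemma gauss_int' (b a : ℝ) (hb : 0 < b) :
    ∫ x : ℝ, Real.exp (-(x - a) ^ 2 / b) = Real.sqrt (Real.pi * b) := by
  rw [show (fun x : ℝ => Real.exp (-(x - a) ^ 2 / b)) = fun x => (fun y : ℝ => Real.exp (-(1/b) * y ^ 2)) (x - a) by
    funext x; congr 1; field_simp]
  rw [integral_sub_right_eq_self (fun y : ℝ => Real.exp (-(1/b) * y ^ 2)) a]
  rw [integral_gaussian (1/b)]
  congr 1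
  field_simp

lemma lineProj_gauss (r : ℝ) (hr : 0 < r) (w : ℝ × ℝ) (θ t : ℝ) :
    lineProj (fun y => gauss r (y - w)) θ t
      = (Real.sqrt (2 * r * Real.sqrt Real.pi) / (2 * Real.pi * r ^ 2))
          * Real.sqrt (Real.pi * (2 * r ^ 2))
          * Real.exp (-(t - dot2 w (uperp θ)) ^ 2 / (2 * r ^ 2)) := by
  have key : ∀ s : ℝ, gauss r (s • uvec θ + t • uperp θ - w)
      = ((Real.sqrt (2 * r * Real.sqrt Real.pi) / (2 * Real.pi * r ^ 2))
          * Real.exp (-(t - dot2 w (uperp θ)) ^ 2 / (2 * r ^ 2)))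
        * Real.exp (-(s - dot2 w (uvec θ)) ^ 2 / (2 * r ^ 2)) := by
    intro s
    rw [gauss, decomp]
    rw [show -((s - dot2 w (uvec θ)) ^ 2 + (t - dot2 w (uperp θ)) ^ 2) / (2 * r ^ 2)
        = -(t - dot2 w (uperp θ)) ^ 2 / (2 * r ^ 2) + -(s - dot2 w (uvec θ)) ^ 2 / (2 * r ^ 2) by
      ring, Real.exp_add]
    ring
  rw [lineProj]
  simp_rw [key]
  rw [MeasureTheory.integral_const_mul, gauss_int' (2 * r ^ 2) _ (by positivity)]
  ring

lemma K_sq (r : ℝ) (hr : 0 < r) :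
    ((Real.sqrt (2 * r * Real.sqrt Real.pi) / (2 * Real.pi * r ^ 2))
        * Real.sqrt (Real.pi * (2 * r ^ 2))) ^ 2 * Real.sqrt (Real.pi * r ^ 2) = 1 := by
  have h1 : Real.sqrt (2 * r * Real.sqrt Real.pi) ^ 2 = 2 * r * Real.sqrt Real.pi :=
    Real.sq_sqrt (by positivity)
  have h2 : Real.sqrt (Real.pi * (2 * r ^ 2)) ^ 2 = Real.pi * (2 * r ^ 2) :=
    Real.sq_sqrt (by positivity)
  have h3 : Real.sqrt (Real.pi * r ^ 2) = Real.sqrt Real.pi * r := by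
    rw [Real.sqrt_mul Real.pi_pos.le, Real.sqrt_sq hr.le]
  have h4 : Real.sqrt Real.pi * Real.sqrt Real.pi = Real.pi :=
    Real.mul_self_sqrt Real.pi_pos.le
  have hπ : (0:ℝ) < Real.pi := Real.pi_pos
  rw [mul_pow, div_pow, h1, h2, h3]
  field_simp
  nlinarith [h4, hπ, hr]

lemma mul_helper (K x y z w : ℝ) (h : x * y = z * w) : (K * x) * (K * y) = K ^ 2 * z * w := by
  have h2 : K * x * (K * y) = K ^ 2 * (x * y) := by ring
  rw [h2, h, ← mul_assoc]

lemma inner_integral_eq (r : ℝ) (hr : 0 < r) (wi wj : ℝ × ℝ) (θ : ℝ) :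
    (∫ t : ℝ, lineProj (fun y => gauss r (y - wi)) θ t
        * lineProj (fun y => gauss r (y - wj)) θ t)
      = Real.exp (-(dot2 (wi - wj) (uperp θ)) ^ 2 / (4 * r ^ 2)) := by
  set K := (Real.sqrt (2 * r * Real.sqrt Real.pi) / (2 * Real.pi * r ^ 2))
      * Real.sqrt (Real.pi * (2 * r ^ 2)) with hK
  set bi := dot2 wi (uperp θ)
  set bj := dot2 wj (uperp θ)
  have hbij : dot2 (wi - wj) (uperp θ) = bi - bj := by
    simp only [dot2, bi, bj, Prod.fst_sub, Prod.snd_sub]; ring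
  have key : ∀ t : ℝ, lineProj (fun y => gauss r (y - wi)) θ t
      * lineProj (fun y => gauss r (y - wj)) θ t
      = (K ^ 2 * Real.exp (-(bi - bj) ^ 2 / (4 * r ^ 2)))
        * Real.exp (-(t - (bi + bj) / 2) ^ 2 / r ^ 2) := by
    intro t
    rw [lineProj_gauss r hr wi θ t, lineProj_gauss r hr wj θ t, ← hK]
    apply mul_helper
    rw [← Real.exp_add, ← Real.exp_add]
    congr 1
    have hr2 : (r:ℝ) ^ 2 ≠ 0 := by positivity
    field_simp
    ring
  simp_rw [key]
  rw [MeasureTheory.integral_const_mul, gauss_int' (r ^ 2) _ (by positivity), hbij]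
  linear_combination Real.exp (-(bi - bj) ^ 2 / (4 * r ^ 2)) * K_sq r hr

lemma phase (w : ℝ × ℝ) : ∃ φ : ℝ, ∀ θ : ℝ, dot2 w (uperp θ) = norm2 w * Real.sin (θ - φ) := by
  by_cases hw : w = 0
  · refine ⟨0, fun θ => ?_⟩
    simp [hw, dot2, norm2, uperp]
  · set z : ℂ := ⟨w.1, w.2⟩ with hz
    have hz0 : z ≠ 0 := by
      intro h
      apply hw
      have h1 : z.re = 0 := by rw [h]; simp
      have h2 : z.im = 0 := by rw [h]; simp
      exact Prod.ext h1 h2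
    have habs : ‖z‖ = norm2 w := by
      rw [Complex.norm_def, Complex.normSq_mk, norm2]
      congr 1; ring
    have habs0 : 0 < ‖z‖ := by
      simpa using (norm_pos_iff.mpr hz0)
    refine ⟨Complex.arg z, fun θ => ?_⟩
    have hcos : Real.cos (Complex.arg z) = w.1 / ‖z‖ := Complex.cos_arg hz0
    have hsin : Real.sin (Complex.arg z) = w.2 / ‖z‖ := Complex.sin_arg z
    rw [Real.sin_sub, ← habs, hcos, hsin, dot2, uperp]
    field_simp
    ring

lemma angle_reduce (w : ℝ × ℝ) (r : ℝ) :
    ∫ θ in (0:ℝ)..π, Real.exp (-(dot2 w (uperp θ)) ^ 2 / (4 * r ^ 2))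
      = ∫ θ in (0:ℝ)..π, Real.exp (-((norm2 w) ^ 2 * Real.sin θ ^ 2) / (4 * r ^ 2)) := by
  obtain ⟨φ, hφ⟩ := phase w
  set f : ℝ → ℝ := fun x => Real.exp (-((norm2 w) ^ 2 * Real.sin x ^ 2) / (4 * r ^ 2)) with hf
  have h1 : ∀ θ : ℝ, Real.exp (-(dot2 w (uperp θ)) ^ 2 / (4 * r ^ 2)) = f (θ - φ) := by
    intro θ
    rw [hφ θ, hf]
    congr 1
    ring
  simp_rw [h1]
  rw [intervalIntegral.integral_comp_sub_right f φ]
  have hper : Function.Periodic f π := by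
    intro x
    simp only [hf]
    rw [Real.sin_add_pi]
    congr 1
    ring
  have h2 := hper.intervalIntegral_add_eq (0 - φ) 0
  rw [show (0:ℝ) - φ + π = π - φ by ring, zero_add] at h2
  exact h2

lemma half_rational (c : ℝ) (hc : 0 ≤ c) :
    ∫ θ in (0:ℝ)..(π/2), 1 / (1 + c * Real.sin θ ^ 2) = π / (2 * Real.sqrt (1 + c)) := by
  set a := Real.sqrt (1 + c) with haa
  have ha2 : a ^ 2 = 1 + c := Real.sq_sqrt (by linarith)
  have ha1 : 1 ≤ a := by
    nlinarith [Real.sqrt_nonneg (1 + c), ha2]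
  have ha0 : 0 < a := by linarith
  have hpos : ∀ θ : ℝ, 0 < 1 + c * Real.sin θ ^ 2 := fun θ => by positivity
  have hfc : Continuous fun θ : ℝ => 1 / (1 + c * Real.sin θ ^ 2) := by
    apply Continuous.div continuous_const
    · continuity
    · exact fun θ => (hpos θ).ne'
  set F : ℝ → ℝ := fun θ => Real.arctan (a * Real.tan θ) / a with hF
  have hder : ∀ θ : ℝ, Real.cos θ ≠ 0 → HasDerivAt F (1 / (1 + c * Real.sin θ ^ 2)) θ := by
    intro θ hθ
    have h1 : HasDerivAt (fun x => a * Real.tan x) (a * (1 / Real.cos θ ^ 2)) θ :=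
      (Real.hasDerivAt_tan hθ).const_mul a
    have h2 : HasDerivAt Real.arctan (1 / (1 + (a * Real.tan θ) ^ 2)) (a * Real.tan θ) :=
      Real.hasDerivAt_arctan (a * Real.tan θ)
    have h3 := (h2.comp θ h1).div_const a
    refine h3.congr_deriv ?_
    symm
    rw [Real.tan_eq_sin_div_cos]
    have h4 : Real.sin θ ^ 2 = 1 - Real.cos θ ^ 2 := by
      have := Real.sin_sq_add_cos_sq θ; linarith
    field_simp
    linear_combination Real.sin_sq_add_cos_sq θ
      + (Real.sin θ ^ 2) * ha2
  set g : ℝ → ℝ := fun x => ∫ θ in (0:ℝ)..x, 1 / (1 + c * Real.sin θ ^ 2) with hg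
  have hgcont : Continuous g :=
    intervalIntegral.continuous_primitive (fun a b => hfc.intervalIntegrable a b) 0
  have heq : ∀ x ∈ Set.Ioo (0:ℝ) (π/2), g x = F x := by
    intro x hx
    have : ∫ θ in (0:ℝ)..x, 1 / (1 + c * Real.sin θ ^ 2) = F x - F 0 := by
      apply intervalIntegral.integral_eq_sub_of_hasDerivAt
      · intro θ hθ
        rw [Set.uIcc_of_le hx.1.le] at hθ
        apply hder
        apply ne_of_gt
        apply Real.cos_pos_of_mem_Ioo
        constructor
        · linarith [hθ.1, Real.pi_pos]
        · exact lt_of_le_of_lt hθ.2 hx.2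
      · exact hfc.intervalIntegrable 0 x
    rw [hg]
    simp only [this, hF, Real.tan_zero, mul_zero, Real.arctan_zero, zero_div, sub_zero]
  have hlim1 : Tendsto g (nhdsWithin (π/2) (Set.Iio (π/2))) (nhds (g (π/2))) :=
    (hgcont.tendsto (π/2)).mono_left nhdsWithin_le_nhds
  have hlim2 : Tendsto F (nhdsWithin (π/2) (Set.Iio (π/2))) (nhds (π / (2 * a))) := by
    have htan : Tendsto Real.tan (nhdsWithin (π/2) (Set.Iio (π/2))) atTop :=
      Real.tendsto_tan_pi_div_two
    have hmul : Tendsto (fun x => a * Real.tan x) (nhdsWithin (π/2) (Set.Iio (π/2))) atTop :=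
      htan.const_mul_atTop ha0
    have harc : Tendsto (fun x => Real.arctan (a * Real.tan x))
        (nhdsWithin (π/2) (Set.Iio (π/2))) (nhds (π/2)) :=
      (tendsto_nhds_of_tendsto_nhdsWithin Real.tendsto_arctan_atTop).comp hmul
    have := harc.div_const a
    convert this using 2
    ring
  have hev : g =ᶠ[nhdsWithin (π/2) (Set.Iio (π/2))] F := by
    filter_upwards [Ioo_mem_nhdsLT_of_mem (Set.mem_Ioc.mpr ⟨by positivity, le_refl _⟩)]
      with x hx using heq x hx
  have : g (π/2) = π / (2 * a) :=
    tendsto_nhds_unique (hlim1.congr' hev) hlim2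
  exact this

lemma symm_halves (f : ℝ → ℝ) (hf : Continuous f) (hsym : ∀ x, f (π - x) = f x) :
    ∫ θ in (0:ℝ)..π, f θ = 2 * ∫ θ in (0:ℝ)..(π/2), f θ := by
  have h1 : ∫ θ in (0:ℝ)..π, f θ
      = (∫ θ in (0:ℝ)..(π/2), f θ) + ∫ θ in (π/2:ℝ)..π, f θ :=
    (intervalIntegral.integral_add_adjacent_intervals (hf.intervalIntegrable _ _)
      (hf.intervalIntegrable _ _)).symm
  have h2 : ∫ θ in (π/2:ℝ)..π, f θ = ∫ θ in (0:ℝ)..(π/2), f θ := by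
    have h := intervalIntegral.integral_comp_sub_left (a := (0:ℝ)) (b := π/2) f π
    rw [show π - π/2 = π/2 by ring, show π - (0:ℝ) = π by ring] at h
    simp only [hsym] at h
    exact h.symm
  rw [h1, h2]; ring

lemma full_rational (c : ℝ) (hc : 0 ≤ c) :
    ∫ θ in (0:ℝ)..π, 1 / (1 + c * Real.sin θ ^ 2) = π / Real.sqrt (1 + c) := by
  have hpos : ∀ θ : ℝ, 0 < 1 + c * Real.sin θ ^ 2 := fun θ => by positivity
  have hfc : Continuous fun θ : ℝ => 1 / (1 + c * Real.sin θ ^ 2) := by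
    apply Continuous.div continuous_const
    · continuity
    · exact fun θ => (hpos θ).ne'
  rw [symm_halves _ hfc (fun x => by rw [Real.sin_pi_sub]), half_rational c hc]
  have : Real.sqrt (1 + c) > 0 := Real.sqrt_pos.mpr (by linarith)
  field_simp

lemma upper_bound_integral (c : ℝ) (hc : 0 ≤ c) :
    ∫ θ in (0:ℝ)..π, Real.exp (-(c * Real.sin θ ^ 2)) ≤ π / Real.sqrt (1 + c) := by
  have hpos : ∀ θ : ℝ, 0 < 1 + c * Real.sin θ ^ 2 := fun θ => by positivity
  have hfc : Continuous fun θ : ℝ => 1 / (1 + c * Real.sin θ ^ 2) := by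
    apply Continuous.div continuous_const
    · continuity
    · exact fun θ => (hpos θ).ne'
  rw [← full_rational c hc]
  apply intervalIntegral.integral_mono_on Real.pi_pos.le
  · exact (Real.continuous_exp.comp (by continuity)).intervalIntegrable _ _
  · exact hfc.intervalIntegrable _ _
  · intro θ _
    have h1 : 1 + c * Real.sin θ ^ 2 ≤ Real.exp (c * Real.sin θ ^ 2) := by
      have := Real.add_one_le_exp (c * Real.sin θ ^ 2); linarith
    rw [Real.exp_neg, inv_eq_one_div, div_le_div_iff₀ (Real.exp_pos _) (hpos θ)]
    linarith [h1]

lemma lower1 (c : ℝ) (hc : 0 ≤ c) :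
    π - c * (π / 2) ≤ ∫ θ in (0:ℝ)..π, Real.exp (-(c * Real.sin θ ^ 2)) := by
  have hint : ∫ θ in (0:ℝ)..π, (1 - c * Real.sin θ ^ 2) = π - c * (π / 2) := by
    rw [intervalIntegral.integral_sub (g := fun θ : ℝ => c * Real.sin θ ^ 2) (intervalIntegrable_const)
      (((continuous_const.mul ((Real.continuous_sin).pow 2)).intervalIntegrable _ _)),
      intervalIntegral.integral_const, intervalIntegral.integral_const_mul, integral_sin_sq]
    simp [Real.sin_pi]
  rw [← hint]
  apply intervalIntegral.integral_mono_on Real.pi_pos.le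
  · exact (continuous_const.sub (continuous_const.mul ((Real.continuous_sin).pow 2))).intervalIntegrable _ _
  · exact (Real.continuous_exp.comp (by continuity)).intervalIntegrable _ _
  · intro θ _
    have := Real.add_one_le_exp (-(c * Real.sin θ ^ 2))
    linarith

lemma lower2 (c : ℝ) (hc : 1 < c) :
    (4 / 3) * (1 / Real.sqrt c) ≤ ∫ θ in (0:ℝ)..π, Real.exp (-(c * Real.sin θ ^ 2)) := by
  have hc0 : (0:ℝ) < c := by linarith
  have hsc : Real.sqrt c * Real.sqrt c = c := Real.mul_self_sqrt hc0.le
  have hsc1 : 1 < Real.sqrt c := by nlinarith [Real.sqrt_nonneg c]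
  set u : ℝ := 1 / Real.sqrt c with hu
  have hu0 : 0 < u := by positivity
  have hu1 : u ≤ 1 := by rw [hu]; rw [div_le_one (by linarith)]; linarith
  have hupi : u ≤ π / 2 := by nlinarith [Real.pi_gt_three]
  have hcont1 : Continuous fun θ : ℝ => Real.exp (-(c * Real.sin θ ^ 2)) :=
    Real.continuous_exp.comp (by continuity)
  have hcont2 : Continuous fun θ : ℝ => Real.exp (-(c * θ ^ 2)) :=
    Real.continuous_exp.comp (by continuity)
  rw [symm_halves _ hcont1 (fun x => by rw [Real.sin_pi_sub])]
  have step2 : ∫ θ in (0:ℝ)..(π/2), Real.exp (-(c * θ ^ 2))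
      ≤ ∫ θ in (0:ℝ)..(π/2), Real.exp (-(c * Real.sin θ ^ 2)) := by
    apply intervalIntegral.integral_mono_on (by positivity)
    · exact hcont2.intervalIntegrable _ _
    · exact hcont1.intervalIntegrable _ _
    · intro θ hθ
      apply Real.exp_le_exp.mpr
      have hs0 : 0 ≤ Real.sin θ :=
        Real.sin_nonneg_of_nonneg_of_le_pi hθ.1 (by linarith [hθ.2, Real.pi_pos])
      have : Real.sin θ ^ 2 ≤ θ ^ 2 := pow_le_pow_left₀ hs0 (Real.sin_le hθ.1) 2
      nlinarith
  have step3 : ∫ θ in (0:ℝ)..u, Real.exp (-(c * θ ^ 2))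
      ≤ ∫ θ in (0:ℝ)..(π/2), Real.exp (-(c * θ ^ 2)) := by
    rw [← intervalIntegral.integral_add_adjacent_intervals
      (hcont2.intervalIntegrable 0 u) (hcont2.intervalIntegrable u (π/2))]
    have : 0 ≤ ∫ θ in u..(π/2), Real.exp (-(c * θ ^ 2)) :=
      intervalIntegral.integral_nonneg hupi (fun x _ => (Real.exp_pos _).le)
    linarith
  have step4 : (2/3) * u ≤ ∫ θ in (0:ℝ)..u, Real.exp (-(c * θ ^ 2)) := by
    have hint : ∫ θ in (0:ℝ)..u, (1 - c * θ ^ 2) = u - c * (u ^ 3 / 3) := by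
      rw [intervalIntegral.integral_sub (g := fun θ : ℝ => c * θ ^ 2) (intervalIntegrable_const)
        ((continuous_const.mul (continuous_pow 2)).intervalIntegrable _ _),
        intervalIntegral.integral_const, intervalIntegral.integral_const_mul, integral_pow]
      norm_num
    have hval : u - c * (u ^ 3 / 3) = (2/3) * u := by
      have hu2 : c * u ^ 2 = 1 := by
        rw [hu]; field_simp
        exact (Real.sq_sqrt hc0.le).symm
      linear_combination (-(u/3)) * hu2
    rw [← hval, ← hint]
    apply intervalIntegral.integral_mono_on hu0.le
    · exact (continuous_const.sub (continuous_const.mul (continuous_pow 2))).intervalIntegrable _ _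
    · exact hcont2.intervalIntegrable _ _
    · intro θ _
      have := Real.add_one_le_exp (-(c * θ ^ 2))
      linarith
  calc (4/3) * (1/Real.sqrt c) = 2 * ((2/3) * u) := by rw [hu]; ring
    _ ≤ 2 * ∫ θ in (0:ℝ)..(π/2), Real.exp (-(c * Real.sin θ ^ 2)) := by linarith

end CoherenceAux

open CoherenceAux Real in
/-- two-sided bound on the angle-averaged correlation of line projections of
two translated Gaussians. -/
theorem coherence_line_projected_gaussians
    (r : ℝ) (hr : 0 < r) (wi wj : ℝ × ℝ) (d : ℝ) (hd : d = norm2 (wi - wj)) :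
    (if d ≤ 2 * r then 1 - d ^ 2 / (8 * r ^ 2) else r / (2 * d))
      ≤ (1 / Real.pi) * ∫ θ in (0 : ℝ)..Real.pi, ∫ t : ℝ,
          lineProj (fun y => gauss r (y - wi)) θ t * lineProj (fun y => gauss r (y - wj)) θ t
    ∧ (1 / Real.pi) * (∫ θ in (0 : ℝ)..Real.pi, ∫ t : ℝ,
          lineProj (fun y => gauss r (y - wi)) θ t * lineProj (fun y => gauss r (y - wj)) θ t)
      ≤ 1 / Real.sqrt (1 + d ^ 2 / (4 * r ^ 2)) := by
  have hd0 : 0 ≤ d := hd ▸ Real.sqrt_nonneg _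
  have hI : (∫ θ in (0 : ℝ)..Real.pi, ∫ t : ℝ,
      lineProj (fun y => gauss r (y - wi)) θ t * lineProj (fun y => gauss r (y - wj)) θ t)
      = ∫ θ in (0:ℝ)..π, Real.exp (-(d ^ 2 / (4 * r ^ 2) * Real.sin θ ^ 2)) := by
    simp_rw [inner_integral_eq r hr wi wj]
    rw [angle_reduce (wi - wj) r, ← hd]
    apply intervalIntegral.integral_congr
    intro θ _
    exact congrArg Real.exp (by field_simp)
  rw [hI]
  obtain ⟨c, hc⟩ : ∃ c : ℝ, c = d ^ 2 / (4 * r ^ 2) := ⟨_, rfl⟩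
  rw [← hc]
  have hc0 : 0 ≤ c := by rw [hc]; positivity
  have hπ : (0:ℝ) < π := Real.pi_pos
  constructor
  · -- lower bound
    split_ifs with h
    · have hl := lower1 c hc0
      have h2 : (1:ℝ) - d ^ 2 / (8 * r ^ 2) = (1/π) * (π - c * (π/2)) := by
        rw [hc]; field_simp; ring
      rw [h2]
      exact mul_le_mul_of_nonneg_left hl (by positivity)
    · push_neg at h
      have hdpos : 0 < d := lt_trans (by positivity) h
      have hc1 : 1 < c := by
        rw [hc, lt_div_iff₀ (by positivity)]
        nlinarith
      have hsqc : Real.sqrt c = d / (2 * r) := by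
        rw [hc, show d ^ 2 / (4 * r ^ 2) = (d / (2 * r)) ^ 2 by ring]
        exact Real.sqrt_sq (by positivity)
      have hl := lower2 c hc1
      rw [hsqc] at hl
      have hπ4 : π ≤ 4 := Real.pi_le_four
      have key : r / (2 * d) ≤ (1/π) * ((4/3) * (1 / (d / (2 * r)))) := by
        rw [show 1 / (d / (2 * r)) = 2 * r / d by field_simp]
        rw [div_le_iff₀ (by positivity)]
        rw [show (1/π) * ((4/3) * (2 * r / d)) * (2 * d) = (16 * r * d) / (3 * π * d) by
          field_simp; ring]
        rw [show (16 * r * d) / (3 * π * d) = (16 * r) / (3 * π) by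
          rw [mul_div_mul_right _ _ hdpos.ne']]
        rw [le_div_iff₀ (by positivity)]
        nlinarith
      calc r / (2 * d) ≤ (1/π) * ((4/3) * (1 / (d / (2 * r)))) := key
        _ ≤ (1/π) * ∫ θ in (0:ℝ)..π, Real.exp (-(c * Real.sin θ ^ 2)) :=
          mul_le_mul_of_nonneg_left hl (by positivity)
  · -- upper bound
    have hu := upper_bound_integral c hc0
    calc (1/π) * ∫ θ in (0:ℝ)..π, Real.exp (-(c * Real.sin θ ^ 2))
        ≤ (1/π) * (π / Real.sqrt (1 + c)) := mul_le_mul_of_nonneg_left hu (by positivity)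
      _ = 1 / Real.sqrt (1 + c) := by field_simp
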